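/- arXiv:2008.03887 — 2 statements merged into one kernel-verified Lean document; each statement's English description precedes it below -/
import Mathlib

section
/- If G and H are graphs with no isolated vertices, then the paired domination number of the direct product G × H is at most the product of the paired domination numbers of G and H: γ_pr(G × H) ≤ γ_pr(G)·γ_pr(H). -/
set_option linter.unusedVariables false
set_option linter.unnecessarySeqFocus false

open SimpleGraph

variable {V : Type*} {W : Type*}

/-- The direct (tensor) product of two simple graphs. -/
def SimpleGraph.tensor (G : SimpleGraph V) (H : SimpleGraph W) : SimpleGraph (V × W) where
  Adj p q := G.Adj p.1 q.1 ∧ H.Adj p.2 q.2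
  symm := ⟨fun p q h => ⟨h.1.symm, h.2.symm⟩⟩
  loopless := ⟨fun p h => G.irrefl h.1⟩

/-- A dominating set: every vertex is in `D` or adjacent to a member of `D`. -/
def SimpleGraph.Dominating (G : SimpleGraph V) (D : Set V) : Prop :=
  ∀ v, ∃ u ∈ D, u = v ∨ G.Adj u v

/-- The domination number. -/
noncomputable def SimpleGraph.domNum (G : SimpleGraph V) : ℕ :=
  sInf {n | ∃ D : Set V, G.Dominating D ∧ D.ncard = n}

/-- A total dominating set. -/
def SimpleGraph.TotalDominating (G : SimpleGraph V) (D : Set V) : Prop :=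
  ∀ v, ∃ u ∈ D, G.Adj u v

/-- The total domination number. -/
noncomputable def SimpleGraph.totalDomNum (G : SimpleGraph V) : ℕ :=
  sInf {n | ∃ D : Set V, G.TotalDominating D ∧ D.ncard = n}

/-- A paired dominating set: dominating and the induced subgraph has a perfect matching. -/
def SimpleGraph.PairedDominating (G : SimpleGraph V) (D : Set V) : Prop :=
  G.Dominating D ∧ ∃ M : (G.induce D).Subgraph, M.IsPerfectMatching

/-- The paired domination number. -/
noncomputable def SimpleGraph.pairedDomNum (G : SimpleGraph V) : ℕ :=
  sInf {n | ∃ D : Set V, G.PairedDominating D ∧ D.ncard = n}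

/-- A 3-packing: vertices pairwise at distance greater than 3. -/
def SimpleGraph.Packing3 (G : SimpleGraph V) (P : Set V) : Prop :=
  P.Pairwise fun u v => ¬G.Reachable u v ∨ 3 < G.dist u v

/-- The 3-packing number. -/
noncomputable def SimpleGraph.packNum3 (G : SimpleGraph V) : ℕ :=
  sSup {n | ∃ P : Set V, G.Packing3 P ∧ P.ncard = n}

/-- A minimal dominating set. -/
def SimpleGraph.MinimalDominating (G : SimpleGraph V) (D : Set V) : Prop :=
  G.Dominating D ∧ ∀ D' ⊆ D, G.Dominating D' → D' = D

/-- The upper domination number. -/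
noncomputable def SimpleGraph.upperDomNum (G : SimpleGraph V) : ℕ :=
  sSup {n | ∃ D : Set V, G.MinimalDominating D ∧ D.ncard = n}

/-- `G` has no isolated vertices. -/
def SimpleGraph.NoIsolated (G : SimpleGraph V) : Prop := ∀ v, ∃ u, G.Adj u v

/-- Direct product of complete graphs `K_{n 0} × ... × K_{n (t-1)}`:
tuples adjacent iff they differ in every coordinate. -/
def prodCompleteGraphs {t : ℕ} (n : Fin t → ℕ) : SimpleGraph (∀ i, Fin (n i)) where
  Adj a b := a ≠ b ∧ ∀ i, a i ≠ b i
  symm := ⟨fun a b h => ⟨h.1.symm, fun i => (h.2 i).symm⟩⟩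
  loopless := ⟨fun a h => h.1 rfl⟩

/-- `G` together with a new pendant vertex (`none`) attached to `v`. -/
def addPendant (G : SimpleGraph V) (v : V) : SimpleGraph (Option V) where
  Adj x y :=
    match x, y with
    | some a, some b => G.Adj a b
    | some a, none => a = v
    | none, some b => b = v
    | none, none => False
  symm := by
    refine ⟨?_⟩
    rintro (_ | a) (_ | b) h <;> simp_all [SimpleGraph.adj_comm]
  loopless := by
    refine ⟨?_⟩
    rintro (_ | a) h <;> simp_all

/-- `G` with a path on `ℓ` vertices appended to vertex `u` via a bridge. -/
def appendPath (G : SimpleGraph V) (u : V) (ℓ : ℕ) : SimpleGraph (V ⊕ Fin ℓ) where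
  Adj x y :=
    match x, y with
    | Sum.inl a, Sum.inl b => G.Adj a b
    | Sum.inl a, Sum.inr j => a = u ∧ (j : ℕ) = 0
    | Sum.inr i, Sum.inl b => b = u ∧ (i : ℕ) = 0
    | Sum.inr i, Sum.inr j => (i : ℕ) + 1 = j ∨ (j : ℕ) + 1 = i
  symm := by
    refine ⟨?_⟩
    rintro (a | i) (b | j) h <;> simp_all [SimpleGraph.adj_comm] <;> tauto
  loopless := by
    refine ⟨?_⟩
    rintro (a | i) h <;> simp_all

/-- `G` with a pendant path on two vertices `(v,1)–(v,2)` attached to each vertex `(v,0)`. -/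
def attachPaths2 (G : SimpleGraph V) : SimpleGraph (V × Fin 3) where
  Adj p q :=
    (p.2 = 0 ∧ q.2 = 0 ∧ G.Adj p.1 q.1) ∨
    (p.1 = q.1 ∧ ((p.2 = 0 ∧ q.2 = 1) ∨ (p.2 = 1 ∧ q.2 = 0) ∨
      (p.2 = 1 ∧ q.2 = 2) ∨ (p.2 = 2 ∧ q.2 = 1)))
  symm := by
    refine ⟨?_⟩
    rintro ⟨a, i⟩ ⟨b, j⟩ h <;> simp_all [SimpleGraph.adj_comm] <;> tauto
  loopless := by
    refine ⟨?_⟩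
    rintro ⟨a, i⟩ h
    rcases h with ⟨-, -, h⟩ | ⟨-, h⟩
    · exact G.irrefl h
    · rcases h with ⟨h1, h2⟩ | ⟨h1, h2⟩ | ⟨h1, h2⟩ | ⟨h1, h2⟩ <;> simp_all

section AuxPD
variable {V : Type*} {W : Type*}

lemma ncard_prod' (s : Set V) (t : Set W) : (s ×ˢ t).ncard = s.ncard * t.ncard := by
  rw [← Nat.card_coe_set_eq, ← Nat.card_coe_set_eq, ← Nat.card_coe_set_eq,
    Nat.card_congr (Equiv.Set.prod s t), Nat.card_prod]

lemma pd_partner {G : SimpleGraph V} {D : Set V}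
    (h : ∃ M : (G.induce D).Subgraph, M.IsPerfectMatching) {u : V} (hu : u ∈ D) :
    ∃ u' ∈ D, G.Adj u' u := by
  obtain ⟨M, hMm, hMs⟩ := h
  obtain ⟨w, hw, -⟩ := hMm (hMs ⟨u, hu⟩)
  exact ⟨↑w, w.2, (M.adj_sub hw).symm⟩

lemma exists_pairedDominating [Fintype V] (G : SimpleGraph V) (hG : G.NoIsolated) :
    ∃ D : Set V, G.PairedDominating D := by
  classical
  set S : Set ℕ := {n | ∃ M : G.Subgraph, M.IsMatching ∧ M.verts.ncard = n} with hS
  have hne : S.Nonempty := ⟨0, ⊥, by intro v hv; simp at hv, by simp⟩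
  have hbdd : BddAbove S := by
    refine ⟨Fintype.card V, ?_⟩
    rintro n ⟨M, hM, rfl⟩
    calc M.verts.ncard ≤ (Set.univ : Set V).ncard :=
          Set.ncard_le_ncard (Set.subset_univ _) Set.finite_univ
      _ = Fintype.card V := by simp [Set.ncard_univ]
  obtain ⟨M, hM, hMcard⟩ := Nat.sSup_mem hne hbdd
  have hdom : G.Dominating M.verts := by
    intro v
    by_cases hv : v ∈ M.verts
    · exact ⟨v, hv, Or.inl rfl⟩
    · obtain ⟨u, hu⟩ := hG v
      by_cases hu' : u ∈ M.verts
      · exact ⟨u, hu', Or.inr hu⟩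
      · exfalso
        have hd : Disjoint M.support (G.subgraphOfAdj hu).support := by
          rw [hM.support_eq_verts, Set.disjoint_left]
          intro x hx hx'
          have hxv := (G.subgraphOfAdj hu).support_subset_verts hx'
          simp only [subgraphOfAdj_verts, Set.mem_insert_iff, Set.mem_singleton_iff] at hxv
          rcases hxv with rfl | rfl
          · exact hu' hx
          · exact hv hx
        have hM' := hM.sup (Subgraph.IsMatching.subgraphOfAdj hu) hd
        have hdisj : Disjoint M.verts ({u, v} : Set V) := by
          rw [Set.disjoint_left]
          intro x hx hx'
          rcases hx' with rfl | hx'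
          · exact hu' hx
          · rw [Set.mem_singleton_iff] at hx'; subst hx'; exact hv hx
        have hcard : (M ⊔ G.subgraphOfAdj hu).verts.ncard = M.verts.ncard + 2 := by
          rw [Subgraph.verts_sup, subgraphOfAdj_verts,
            Set.ncard_union_eq hdisj (Set.toFinite _) (Set.toFinite _),
            Set.ncard_pair hu.ne]
        have hle : M.verts.ncard + 2 ≤ sSup S := le_csSup hbdd ⟨_, hM', hcard⟩
        omega
  refine ⟨M.verts, hdom, ?_⟩
  refine ⟨⟨Set.univ, fun a b => M.Adj ↑a ↑b, fun h => M.adj_sub h,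
    fun _ => Set.mem_univ _, ⟨fun a b h => M.adj_symm h⟩⟩, ?_, fun _ => Set.mem_univ _⟩
  rintro ⟨v, hv⟩ -
  obtain ⟨w, hw, huniq⟩ := hM hv
  refine ⟨⟨w, M.edge_vert (M.adj_symm hw)⟩, hw, ?_⟩
  intro y hy
  exact Subtype.ext (huniq ↑y hy)

end AuxPD

theorem stmt0 {V W : Type*} [Fintype V] [Fintype W] (G : SimpleGraph V) (H : SimpleGraph W)
    (hG : G.NoIsolated) (hH : H.NoIsolated) :
    (G.tensor H).pairedDomNum ≤ G.pairedDomNum * H.pairedDomNum := by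
  classical
  obtain ⟨D1, hD1⟩ := exists_pairedDominating G hG
  obtain ⟨D2, hD2⟩ := exists_pairedDominating H hH
  have hGne : {n | ∃ D : Set V, G.PairedDominating D ∧ D.ncard = n}.Nonempty :=
    ⟨D1.ncard, D1, hD1, rfl⟩
  have hHne : {n | ∃ D : Set W, H.PairedDominating D ∧ D.ncard = n}.Nonempty :=
    ⟨D2.ncard, D2, hD2, rfl⟩
  obtain ⟨DG, hDG, hDGcard⟩ := Nat.sInf_mem hGne
  obtain ⟨DH, hDH, hDHcard⟩ := Nat.sInf_mem hHne
  apply Nat.sInf_le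
  refine ⟨DG ×ˢ DH, ⟨?_, ?_⟩, ?_⟩
  · rintro ⟨v, w⟩
    obtain ⟨u, hu, hucase⟩ := hDG.1 v
    obtain ⟨x, hx, hxcase⟩ := hDH.1 w
    obtain ⟨u', hu', hu'adj⟩ := pd_partner hDG.2 hu
    obtain ⟨x', hx', hx'adj⟩ := pd_partner hDH.2 hx
    rcases hucase with rfl | huadj <;> rcases hxcase with rfl | hxadj
    · exact ⟨(u', x'), Set.mk_mem_prod hu' hx', Or.inr (show _ ∧ _ from ⟨hu'adj, hx'adj⟩)⟩
    · exact ⟨(u', x), Set.mk_mem_prod hu' hx, Or.inr (show _ ∧ _ from ⟨hu'adj, hxadj⟩)⟩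
    · exact ⟨(u, x'), Set.mk_mem_prod hu hx', Or.inr (show _ ∧ _ from ⟨huadj, hx'adj⟩)⟩
    · exact ⟨(u, x), Set.mk_mem_prod hu hx, Or.inr (show _ ∧ _ from ⟨huadj, hxadj⟩)⟩
  · obtain ⟨MG, hMG⟩ := hDG.2
    obtain ⟨MH, hMH⟩ := hDH.2
    refine ⟨⟨Set.univ,
      fun p q => MG.Adj ⟨p.1.1, p.2.1⟩ ⟨q.1.1, q.2.1⟩ ∧ MH.Adj ⟨p.1.2, p.2.2⟩ ⟨q.1.2, q.2.2⟩,
      fun h => show _ ∧ _ from ⟨MG.adj_sub h.1, MH.adj_sub h.2⟩,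
      fun _ => Set.mem_univ _,
      ⟨fun p q h => ⟨MG.adj_symm h.1, MH.adj_symm h.2⟩⟩⟩, ?_, fun _ => Set.mem_univ _⟩
    rintro p -
    obtain ⟨b, hb, hbu⟩ := hMG.1 (hMG.2 ⟨p.1.1, p.2.1⟩)
    obtain ⟨c, hc, hcu⟩ := hMH.1 (hMH.2 ⟨p.1.2, p.2.2⟩)
    refine ⟨⟨(↑b, ↑c), Set.mk_mem_prod b.2 c.2⟩, ⟨hb, hc⟩, ?_⟩
    rintro q ⟨h1, h2⟩
    have e1 := hbu _ h1
    have e2 := hcu _ h2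
    exact Subtype.ext (Prod.ext (congrArg Subtype.val e1) (congrArg Subtype.val e2))
  · rw [ncard_prod', hDGcard, hDHcard]
    rfl
end

section
/- Fix t ≥ 3 and n_i ≥ 2t+1 for 1 ≤ i ≤ t, and let G = K_{n_1} × ... × K_{n_t}. For nonnegative integers a, b, γ_pr(G^{·a} × G^{·b}) ≤ 2^{a+b}((a+2)t + 2a + 2) + 2^b·b·(t + a + 2), where G^{·ℓ} denotes G with a path on ℓ vertices appended via a bridge. -/
set_option linter.unusedVariables false
set_option linter.unnecessarySeqFocus false

open SimpleGraph

variable {V : Type*} {W : Type*}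

section PDHelpers

open SimpleGraph

lemma matching_of_pairing {V : Type*} (G : SimpleGraph V) (D : Set V) (μ : V → V)
    (h : ∀ x ∈ D, μ x ∈ D ∧ μ x ≠ x ∧ μ (μ x) = x ∧ G.Adj x (μ x)) :
    ∃ M : (G.induce D).Subgraph, M.IsPerfectMatching := by
  refine ⟨⟨Set.univ, fun x y => (y : V) = μ (x : V) ∨ (x : V) = μ (y : V), ?_, fun _ => trivial,
    ?_⟩, ?_, fun _ => trivial⟩
  · rintro ⟨x, hx⟩ ⟨y, hy⟩ (rfl | rfl)
    · exact (h x hx).2.2.2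
    · exact ((h y hy).2.2.2).symm
  · refine ⟨?_⟩
    rintro ⟨x, hx⟩ ⟨y, hy⟩ (rfl | rfl)
    · right; rfl
    · left; rfl
  · rintro ⟨x, hx⟩ -
    refine ⟨⟨μ x, (h x hx).1⟩, Or.inl rfl, ?_⟩
    rintro ⟨y, hy⟩ (hy1 | hy2)
    · exact Subtype.ext hy1
    · apply Subtype.ext
      simp only at hy2 ⊢
      rw [hy2, (h y hy).2.2.1]

lemma arith_key (t na nb A B : ℕ) (ht : 3 ≤ t) (hA : na + 2 ≤ 2*A) (hB : nb + 2 ≤ 2*B) :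
    2*t+2 + (t+1)*(na+nb) + na*nb ≤ A*B*(2*t+2) := by
  obtain ⟨P, hP⟩ := Nat.exists_eq_add_of_le hA
  obtain ⟨Q, hQ⟩ := Nat.exists_eq_add_of_le hB
  obtain ⟨t', rfl⟩ : ∃ t', t = t' + 3 := ⟨t - 3, by omega⟩
  have h4 : 4 * (2*(t'+3)+2 + ((t'+3)+1)*(na+nb) + na*nb) ≤ 4 * (A*B*(2*(t'+3)+2)) := by
    have e : 4 * (A*B*(2*(t'+3)+2)) = (2*A) * (2*B) * (2*(t'+3)+2) := by ring
    rw [e, hP, hQ]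
    have key : (na+2+P)*(nb+2+Q)*(2*(t'+3)+2) =
        4*(2*(t'+3)+2 + ((t'+3)+1)*(na+nb) + na*nb) +
        (4*((t'+3)+1)*(P+Q) + (2*t'+4)*((na+P)*(nb+Q)) + 4*(na*Q + P*nb + P*Q)) := by
      ring
    rw [key]
    exact Nat.le_add_right _ _
  exact Nat.le_of_mul_le_mul_left h4 (by norm_num)

lemma na_bound (a : ℕ) : a + a % 2 + 2 ≤ 2 ^ (a+1) := by
  induction a with
  | zero => simp
  | succ k ih =>
    have h2 : 2 ≤ 2 ^ (k+1) := Nat.one_lt_two_pow_iff.mpr (by omega)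
    rw [pow_succ]
    omega

lemma pigeonT {t : ℕ} {n : Fin t → ℕ} (c : ℕ → ∀ i, Fin (n i)) (N : ℕ)
    (hinj : ∀ i : Fin t, ∀ k, k < N → ∀ l, l < N → c k i = c l i → k = l)
    (T : Finset (∀ i, Fin (n i))) (hN : T.card * t < N) :
    ∃ m < N, ∀ x ∈ T, ∀ i, c m i ≠ x i := by
  classical
  set Bad := (Finset.range N).filter (fun m => ∃ x ∈ T, ∃ i, c m i = x i) with hBad
  have hsub : Bad ⊆ T.biUnion (fun x => Finset.univ.biUnion fun i : Fin t =>
      (Finset.range N).filter (fun m => c m i = x i)) := by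
    intro m hm
    simp only [hBad, Finset.mem_filter, Finset.mem_range] at hm
    obtain ⟨hmN, x, hxT, i, hi⟩ := hm
    simp only [Finset.mem_biUnion, Finset.mem_filter, Finset.mem_range]
    exact ⟨x, hxT, i, Finset.mem_univ i, hmN, hi⟩
  have hcard : Bad.card ≤ T.card * t := by
    calc Bad.card ≤ _ := Finset.card_le_card hsub
    _ ≤ ∑ x ∈ T, (Finset.univ.biUnion fun i : Fin t =>
        (Finset.range N).filter (fun m => c m i = x i)).card := Finset.card_biUnion_le
    _ ≤ ∑ x ∈ T, t := by
        refine Finset.sum_le_sum fun x _ => ?_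
        calc _ ≤ ∑ i : Fin t, ((Finset.range N).filter (fun m => c m i = x i)).card :=
              Finset.card_biUnion_le
        _ ≤ ∑ i : Fin t, 1 := by
            refine Finset.sum_le_sum fun i _ => ?_
            refine Finset.card_le_one.mpr fun k hk l hl => ?_
            simp only [Finset.mem_filter, Finset.mem_range] at hk hl
            exact hinj i k hk.1 l hl.1 (hk.2.trans hl.2.symm)
        _ = t := by simp
    _ = T.card * t := by rw [Finset.sum_const, smul_eq_mul]
  have hns : ¬ (Finset.range N ⊆ Bad) := by
    intro hsub2
    have := Finset.card_le_card hsub2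
    rw [Finset.card_range] at this
    omega
  obtain ⟨m, hmN, hmBad⟩ := Finset.not_subset.mp hns
  refine ⟨m, Finset.mem_range.mp hmN, fun x hx i hi => ?_⟩
  exact hmBad (by simp only [hBad, Finset.mem_filter]; exact ⟨hmN, x, hx, i, hi⟩)

def flipn (r : ℕ) : ℕ := if r % 2 = 0 then r + 1 else r - 1

lemma flipn_flipn (r : ℕ) : flipn (flipn r) = r := by
  unfold flipn; split <;> split <;> omega

lemma flipn_ne (r : ℕ) : flipn r ≠ r := by unfold flipn; split <;> omega

lemma flipn_lt {r m : ℕ} (h : r < m) (hm : m % 2 = 0) : flipn r < m := by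
  unfold flipn; split <;> omega

def kf (t r k : ℕ) : ℕ := if r % 2 = 0 then (k + 1) % (t + 1) else (k + t) % (t + 1)

lemma kf_le (t r k : ℕ) : kf t r k ≤ t := by
  unfold kf; split <;> exact Nat.lt_succ_iff.mp (Nat.mod_lt _ (by omega))

lemma kf_kf {t r k : ℕ} (hk : k ≤ t) : kf t (flipn r) (kf t r k) = k := by
  have h1 : (flipn r) % 2 = 1 - r % 2 := by unfold flipn; split <;> omega
  unfold kf
  rcases Nat.even_or_odd r with h | h <;> simp [Nat.even_iff, Nat.odd_iff] at h <;>
    simp [h, h1]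
  · rw [show k + 1 + t = k + (t+1) by ring, Nat.add_mod_right, Nat.mod_eq_of_lt (by omega)]
  · rw [show k + t + 1 = k + (t+1) by ring, Nat.add_mod_right, Nat.mod_eq_of_lt (by omega)]

lemma kf_ne {t r k : ℕ} (ht : 1 ≤ t) (hk : k ≤ t) : kf t r k ≠ k := by
  unfold kf
  split
  · rcases Nat.lt_or_ge k t with h | h
    · rw [Nat.mod_eq_of_lt (by omega)]; omega
    · have hkt : k = t := by omega
      subst hkt; simp; omega
  · rcases Nat.eq_zero_or_pos k with h | h
    · subst h; rw [Nat.mod_eq_of_lt (by omega)]; omega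
    · rw [show k + t = (k-1) + (t+1) by omega, Nat.add_mod_right,
        Nat.mod_eq_of_lt (by omega)]; omega

def posF {V : Type*} (w : V) (a : ℕ) : ℕ → V ⊕ Fin a := fun r =>
  if r < a % 2 then Sum.inl w
  else if h : r - a % 2 < a then Sum.inr ⟨r - a % 2, h⟩ else Sum.inl w

section posFsec
variable {V : Type*} {G : SimpleGraph V} {w : V} {a : ℕ}

lemma posF_zero (h : a % 2 = 1) : posF w a 0 = Sum.inl w := by simp [posF, h]

lemma posF_inr {r : ℕ} (h1 : a % 2 ≤ r) (h2 : r < a + a % 2) :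
    posF w a r = Sum.inr ⟨r - a % 2, by omega⟩ := by
  unfold posF
  rw [if_neg (by omega), dif_pos (by omega)]

lemma posF_idx (i : Fin a) : posF w a ((i : ℕ) + a % 2) = Sum.inr i := by
  rw [posF_inr (by omega) (by have := i.isLt; omega)]
  congr 1
  exact Fin.ext (by simp)

lemma posF_eq_inl {x : V} {r : ℕ} (hr : r < a + a % 2) (h : posF w a r = Sum.inl x) :
    r = 0 ∧ a % 2 = 1 ∧ x = w := by
  by_cases h1 : r < a % 2
  · unfold posF at h
    rw [if_pos h1] at h
    injection h with h
    exact ⟨by omega, by omega, h.symm⟩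
  · rw [posF_inr (by omega) hr] at h; exact absurd h (by simp)

lemma posF_eq_inr {z : Fin a} {r : ℕ} (hr : r < a + a % 2) (h : posF w a r = Sum.inr z) :
    r = (z : ℕ) + a % 2 := by
  by_cases h1 : r < a % 2
  · unfold posF at h; rw [if_pos h1] at h; exact absurd h (by simp)
  · rw [posF_inr (by omega) hr] at h
    simp only [Sum.inr.injEq] at h
    rw [← h]; simp; omega

lemma posF_inj {r r' : ℕ} (hr : r < a + a % 2) (hr' : r' < a + a % 2)
    (h : posF w a r = posF w a r') : r = r' := by
  by_cases h1 : r < a % 2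
  · by_cases h2 : r' < a % 2
    · omega
    · rw [posF_inr (by omega) hr'] at h
      simp [posF, h1] at h
  · by_cases h2 : r' < a % 2
    · rw [posF_inr (by omega) hr] at h
      simp [posF, h2] at h
    · rw [posF_inr (by omega) hr, posF_inr (by omega) hr'] at h
      simp only [Sum.inr.injEq, Fin.mk.injEq] at h
      omega

lemma posF_adj {r : ℕ} (h : r + 1 < a + a % 2) :
    (appendPath G w a).Adj (posF w a r) (posF w a (r+1)) := by
  by_cases h1 : r < a % 2
  · have ha : a % 2 = 1 := by omega
    have hr0 : r = 0 := by omega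
    subst hr0
    rw [posF_zero ha, posF_inr (by omega) h]
    show _ = _ ∧ _
    exact ⟨rfl, by simp [ha]⟩
  · rw [posF_inr (by omega) (by omega), posF_inr (by omega) h]
    show _ ∨ _
    left; simp; omega

lemma posF_adj_flip {r : ℕ} (h : r < a + a % 2) :
    (appendPath G w a).Adj (posF w a r) (posF w a (flipn r)) := by
  unfold flipn
  split
  · exact posF_adj (by omega)
  · have h1 : r - 1 + 1 = r := by omega
    have h2 := @posF_adj V G w a (r-1) (by omega)
    rw [h1] at h2
    exact h2.symm

lemma posF_nbr (i : Fin a) :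
    ∃ r < a + a % 2, (appendPath G w a).Adj (posF w a r) (Sum.inr i) := by
  by_cases h0 : (i : ℕ) = 0
  · by_cases ha : a % 2 = 1
    · refine ⟨0, by have := i.isLt; omega, ?_⟩
      rw [posF_zero ha]
      exact ⟨rfl, h0⟩
    · have ha2 : 2 ≤ a := by have := i.isLt; omega
      refine ⟨1, by omega, ?_⟩
      rw [posF_inr (by omega) (by omega)]
      show _ ∨ _
      right; simp; omega
  · refine ⟨(i : ℕ) - 1 + a % 2, by have := i.isLt; omega, ?_⟩
    rw [posF_inr (by omega) (by have := i.isLt; omega)]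
    show _ ∨ _
    left; simp; omega

end posFsec

def cF {t : ℕ} {n : Fin t → ℕ} (hn : ∀ i, 0 < n i) (i1 : Fin t) (s : ℕ) :
    ℕ → ∀ i, Fin (n i) :=
  fun k i => ⟨(if i = i1 then k + s else k) % n i, Nat.mod_lt _ (hn i)⟩

end PDHelpers


set_option maxHeartbeats 2000000 in
theorem stmt14 {t : ℕ} (ht : 3 ≤ t) (n : Fin t → ℕ) (hn : ∀ i, 2 * t + 1 ≤ n i)
    (u v : ∀ i, Fin (n i)) (a b : ℕ) :
    ((appendPath (prodCompleteGraphs n) u a).tensor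
        (appendPath (prodCompleteGraphs n) v b)).pairedDomNum ≤
      2 ^ (a + b) * ((a + 2) * t + 2 * a + 2) + 2 ^ b * b * (t + a + 2) := by
  classical
  have hn0 : ∀ i, 0 < n i := fun i => by have := hn i; omega
  set i0 : Fin t := ⟨0, by omega⟩ with hi0def
  set i1 : Fin t := ⟨1, by omega⟩ with hi1def
  have hi01 : i0 ≠ i1 := by
    rw [hi0def, hi1def]
    intro h
    have := congrArg Fin.val h
    simp at this
  -- choice of shift s
  have cancel : ∀ (s s' : ℕ), s < 3 → s' < 3 → ∀ w : ℕ,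
      (w + s) % n i1 = (w + s') % n i1 → s = s' := by
    intro s s' hs hs' w h
    have hb : 3 ≤ n i1 := by have := hn i1; omega
    have h2 : s % n i1 = s' % n i1 := Nat.ModEq.add_left_cancel' w h
    rwa [Nat.mod_eq_of_lt (by omega), Nat.mod_eq_of_lt (by omega)] at h2
  obtain ⟨s, hs3, hsu, hsv⟩ :
      ∃ s, s < 3 ∧ ((u i0 : ℕ) + s) % n i1 ≠ (u i1 : ℕ) ∧
        ((v i0 : ℕ) + s) % n i1 ≠ (v i1 : ℕ) := by
    by_contra hcon
    push_neg at hcon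
    have hd : ∀ s, s < 3 → ((u i0 : ℕ) + s) % n i1 = (u i1 : ℕ) ∨
        ((v i0 : ℕ) + s) % n i1 = (v i1 : ℕ) := by
      intro s hs
      by_cases h : ((u i0 : ℕ) + s) % n i1 = (u i1 : ℕ)
      · exact Or.inl h
      · exact Or.inr (hcon s hs h)
    have hP : ∀ s s', s < 3 → s' < 3 → s ≠ s' →
        ((u i0 : ℕ) + s) % n i1 = (u i1 : ℕ) →
        ((u i0 : ℕ) + s') % n i1 = (u i1 : ℕ) → False :=
      fun s s' hs hs' hne h h' => hne (cancel s s' hs hs' _ (h.trans h'.symm))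
    have hQ : ∀ s s', s < 3 → s' < 3 → s ≠ s' →
        ((v i0 : ℕ) + s) % n i1 = (v i1 : ℕ) →
        ((v i0 : ℕ) + s') % n i1 = (v i1 : ℕ) → False :=
      fun s s' hs hs' hne h h' => hne (cancel s s' hs hs' _ (h.trans h'.symm))
    rcases hd 0 (by omega) with h0 | h0 <;> rcases hd 1 (by omega) with h1 | h1 <;>
      rcases hd 2 (by omega) with h2 | h2
    · exact hP 0 1 (by omega) (by omega) (by omega) h0 h1
    · exact hP 0 1 (by omega) (by omega) (by omega) h0 h1
    · exact hP 0 2 (by omega) (by omega) (by omega) h0 h2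
    · exact hQ 1 2 (by omega) (by omega) (by omega) h1 h2
    · exact hP 1 2 (by omega) (by omega) (by omega) h1 h2
    · exact hQ 0 2 (by omega) (by omega) (by omega) h0 h2
    · exact hQ 0 1 (by omega) (by omega) (by omega) h0 h1
    · exact hQ 0 1 (by omega) (by omega) (by omega) h0 h1
  set c : ℕ → ∀ i, Fin (n i) := cF hn0 i1 s with hcdef
  have hcval : ∀ k i, (c k i : ℕ) = (if i = i1 then k + s else k) % n i := by
    intro k i; rw [hcdef]; rfl
  have hci0 : ∀ k, k < 2*t+1 → (c k i0 : ℕ) = k := by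
    intro k hk
    rw [hcval, if_neg hi01, Nat.mod_eq_of_lt (by have := hn i0; omega)]
  have hcinj : ∀ i : Fin t, ∀ k, k < 2*t+1 → ∀ l, l < 2*t+1 → c k i = c l i → k = l := by
    intro i k hk l hl h
    have h' := congrArg Fin.val h
    rw [hcval, hcval] at h'
    have hni : 2*t+1 ≤ n i := hn i
    by_cases hi : i = i1
    · rw [if_pos hi, if_pos hi] at h'
      have h2 : k % n i = l % n i := Nat.ModEq.add_right_cancel' s h'
      rwa [Nat.mod_eq_of_lt (by omega), Nat.mod_eq_of_lt (by omega)] at h2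
    · rw [if_neg hi, if_neg hi] at h'
      rwa [Nat.mod_eq_of_lt (by omega), Nat.mod_eq_of_lt (by omega)] at h'
  have hcne2 : ∀ k l, k < 2*t+1 → l < 2*t+1 → k ≠ l → c k ≠ c l :=
    fun k l hk hl hkl h => hkl (hcinj i0 k hk l hl (congrFun h i0))
  have hcadj : ∀ k l, k < 2*t+1 → l < 2*t+1 → k ≠ l →
      (prodCompleteGraphs n).Adj (c k) (c l) := by
    intro k l hk hl hkl
    exact (⟨hcne2 k l hk hl hkl, fun i h => hkl (hcinj i k hk l hl h)⟩ : _ ∧ _)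
  have hcu : ∀ k, k < 2*t+1 → c k ≠ u := by
    intro k hk h
    have h0' := congrArg Fin.val (congrFun h i0)
    have h1' := congrArg Fin.val (congrFun h i1)
    rw [hcval, if_neg hi01, Nat.mod_eq_of_lt (by have := hn i0; omega)] at h0'
    rw [hcval, if_pos rfl] at h1'
    rw [h0'] at h1'
    exact hsu h1'
  have hcv : ∀ k, k < 2*t+1 → c k ≠ v := by
    intro k hk h
    have h0' := congrArg Fin.val (congrFun h i0)
    have h1' := congrArg Fin.val (congrFun h i1)
    rw [hcval, if_neg hi01, Nat.mod_eq_of_lt (by have := hn i0; omega)] at h0'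
    rw [hcval, if_pos rfl] at h1'
    rw [h0'] at h1'
    exact hsv h1'
  have hdom2 : ∀ x y : (∀ i, Fin (n i)),
      ∃ m < 2*t+1, (∀ i, c m i ≠ x i) ∧ (∀ i, c m i ≠ y i) := by
    intro x y
    have hcard2 : ({x, y} : Finset (∀ i, Fin (n i))).card * t < 2*t+1 := by
      have h1 : ({x, y} : Finset (∀ i, Fin (n i))).card ≤ 2 :=
        (Finset.card_insert_le _ _).trans (by simp)
      nlinarith
    obtain ⟨m, hm, hgood⟩ := pigeonT c (2*t+1) hcinj {x, y} hcard2
    exact ⟨m, hm, fun i => hgood x (by simp) i, fun i => hgood y (by simp) i⟩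
  have hdom1 : ∀ x : (∀ i, Fin (n i)), ∃ k < t+1, ∀ i, c k i ≠ x i := by
    intro x
    obtain ⟨k, hk, hgood⟩ := pigeonT c (t+1)
      (fun i k hk l hl => hcinj i k (by omega) l (by omega)) {x} (by simp)
    exact ⟨k, hk, fun i => hgood x (by simp) i⟩
  have hGadj : ∀ (m : ℕ) (x : ∀ i, Fin (n i)), (∀ i, c m i ≠ x i) →
      (prodCompleteGraphs n).Adj (c m) x :=
    fun m x h => (⟨fun he => h i0 (by rw [he]), h⟩ : _ ∧ _)
  set na := a + a % 2 with hnadef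
  set nb := b + b % 2 with hnbdef
  have hnae : na % 2 = 0 := by omega
  have hnbe : nb % 2 = 0 := by omega
  -- the paired dominating set
  set D : Set (((∀ i, Fin (n i)) ⊕ Fin a) × ((∀ i, Fin (n i)) ⊕ Fin b)) :=
    (fun m => (Sum.inl (c m), Sum.inl (c m))) '' ↑(Finset.range (2*t+1)) ∪
    {(Sum.inl (c 0), Sum.inl (c 1))} ∪
    (fun p : ℕ × ℕ => (Sum.inl (c p.1), posF v b p.2)) ''
      ↑(Finset.range (t+1) ×ˢ Finset.range nb) ∪
    (fun p : ℕ × ℕ => (posF u a p.2, Sum.inl (c p.1))) ''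
      ↑(Finset.range (t+1) ×ˢ Finset.range na) ∪
    (fun p : ℕ × ℕ => (posF u a p.1, posF v b p.2)) ''
      ↑(Finset.range na ×ˢ Finset.range nb) with hDdef
  have memCore : ∀ m, m < 2*t+1 → (Sum.inl (c m), Sum.inl (c m)) ∈ D := by
    intro m hm
    rw [hDdef]
    exact Set.mem_union_left _ (Set.mem_union_left _ (Set.mem_union_left _
      (Set.mem_union_left _ ⟨m, by simp [hm], rfl⟩)))
  have memExtra : ((Sum.inl (c 0), Sum.inl (c 1)) :
      ((∀ i, Fin (n i)) ⊕ Fin a) × ((∀ i, Fin (n i)) ⊕ Fin b)) ∈ D := by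
    rw [hDdef]
    exact Set.mem_union_left _ (Set.mem_union_left _ (Set.mem_union_left _
      (Set.mem_union_right _ rfl)))
  have memCol : ∀ k r, k < t+1 → r < nb → (Sum.inl (c k), posF v b r) ∈ D := by
    intro k r hk hr
    rw [hDdef]
    exact Set.mem_union_left _ (Set.mem_union_left _ (Set.mem_union_right _
      ⟨(k, r), by simp [hk, hr], rfl⟩))
  have memRow : ∀ k r, k < t+1 → r < na → (posF u a r, Sum.inl (c k)) ∈ D := by
    intro k r hk hr
    rw [hDdef]
    exact Set.mem_union_left _ (Set.mem_union_right _ ⟨(k, r), by simp [hk, hr], rfl⟩)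
  have memGrid : ∀ r r', r < na → r' < nb → (posF u a r, posF v b r') ∈ D := by
    intro r r' hr hr'
    rw [hDdef]
    exact Set.mem_union_right _ ⟨(r, r'), by simp [hr, hr'], rfl⟩
  -- the pairing function
  set μ : (((∀ i, Fin (n i)) ⊕ Fin a) × ((∀ i, Fin (n i)) ⊕ Fin b)) →
      (((∀ i, Fin (n i)) ⊕ Fin a) × ((∀ i, Fin (n i)) ⊕ Fin b)) := fun z =>
    match z with
    | (Sum.inl x, Sum.inl y) =>
      if x = u then
        (if y = v then (posF u a (flipn 0), posF v b (flipn 0))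
         else (posF u a (flipn 0), Sum.inl (c (kf t 0 ((y i0 : ℕ))))))
      else if y = v then (Sum.inl (c (kf t 0 ((x i0 : ℕ)))), posF v b (flipn 0))
      else if x = y then
        (if (x i0 : ℕ) = 2*t then (Sum.inl (c 0), Sum.inl (c 1))
         else if (x i0 : ℕ) % 2 = 0 then
           (Sum.inl (c ((x i0 : ℕ)+1)), Sum.inl (c ((x i0 : ℕ)+1)))
         else (Sum.inl (c ((x i0 : ℕ)-1)), Sum.inl (c ((x i0 : ℕ)-1))))
      else (Sum.inl (c (2*t)), Sum.inl (c (2*t)))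
    | (Sum.inl x, Sum.inr j) =>
      if x = u then (posF u a (flipn 0), posF v b (flipn ((j : ℕ) + b % 2)))
      else (Sum.inl (c (kf t ((j : ℕ) + b % 2) ((x i0 : ℕ)))),
        posF v b (flipn ((j : ℕ) + b % 2)))
    | (Sum.inr i, Sum.inl y) =>
      if y = v then (posF u a (flipn ((i : ℕ) + a % 2)), posF v b (flipn 0))
      else (posF u a (flipn ((i : ℕ) + a % 2)),
        Sum.inl (c (kf t ((i : ℕ) + a % 2) ((y i0 : ℕ)))))
    | (Sum.inr i, Sum.inr j) =>
      (posF u a (flipn ((i : ℕ) + a % 2)), posF v b (flipn ((j : ℕ) + b % 2)))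
    with hμdef
  have evalCore : ∀ m, m < 2*t+1 → μ (Sum.inl (c m), Sum.inl (c m)) =
      (if m = 2*t then (Sum.inl (c 0), Sum.inl (c 1))
       else if m % 2 = 0 then (Sum.inl (c (m+1)), Sum.inl (c (m+1)))
       else (Sum.inl (c (m-1)), Sum.inl (c (m-1)))) := by
    intro m hm
    rw [hμdef]
    simp only
    rw [if_neg (hcu m hm), if_neg (hcv m hm), if_true, hci0 m hm]
  have evalExtra : μ (Sum.inl (c 0), Sum.inl (c 1)) =
      (Sum.inl (c (2*t)), Sum.inl (c (2*t))) := by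
    rw [hμdef]
    simp only
    rw [if_neg (hcu 0 (by omega)), if_neg (hcv 1 (by omega)),
      if_neg (hcne2 0 1 (by omega) (by omega) (by omega))]
  have evalCol : ∀ (x : ∀ i, Fin (n i)) (r : ℕ), x ≠ u → r < nb →
      μ (Sum.inl x, posF v b r) =
        (Sum.inl (c (kf t r ((x i0 : ℕ)))), posF v b (flipn r)) := by
    intro x r hxu hr
    by_cases h1 : r < b % 2
    · have hb1 : b % 2 = 1 := by omega
      have hr0 : r = 0 := by omega
      subst hr0
      rw [posF_zero hb1, hμdef]
      simp only
      rw [if_neg hxu, if_true]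
    · rw [posF_inr (by omega) (by omega), hμdef]
      simp only
      rw [if_neg hxu]
      rw [show r - b % 2 + b % 2 = r by omega]
  have evalRow : ∀ (y : ∀ i, Fin (n i)) (r : ℕ), y ≠ v → r < na →
      μ (posF u a r, Sum.inl y) =
        (posF u a (flipn r), Sum.inl (c (kf t r ((y i0 : ℕ))))) := by
    intro y r hyv hr
    by_cases h1 : r < a % 2
    · have ha1 : a % 2 = 1 := by omega
      have hr0 : r = 0 := by omega
      subst hr0
      rw [posF_zero ha1, hμdef]
      simp only
      rw [if_true, if_neg hyv]
    · rw [posF_inr (by omega) (by omega), hμdef]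
      simp only
      rw [if_neg hyv]
      rw [show r - a % 2 + a % 2 = r by omega]
  have evalGrid : ∀ r r', r < na → r' < nb →
      μ (posF u a r, posF v b r') = (posF u a (flipn r), posF v b (flipn r')) := by
    intro r r' hr hr'
    by_cases h1 : r < a % 2 <;> by_cases h2 : r' < b % 2
    · have ha1 : a % 2 = 1 := by omega
      have hb1 : b % 2 = 1 := by omega
      have hr0 : r = 0 := by omega
      have hr0' : r' = 0 := by omega
      subst hr0; subst hr0'
      rw [posF_zero ha1, posF_zero hb1, hμdef]
      simp only
      rw [if_true, if_true]
    · have ha1 : a % 2 = 1 := by omega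
      have hr0 : r = 0 := by omega
      subst hr0
      rw [posF_zero ha1, posF_inr (by omega) (by omega), hμdef]
      simp only
      rw [if_true]
      rw [show r' - b % 2 + b % 2 = r' by omega]
    · have hb1 : b % 2 = 1 := by omega
      have hr0' : r' = 0 := by omega
      subst hr0'
      rw [posF_zero hb1, posF_inr (by omega) (by omega), hμdef]
      simp only
      rw [if_true]
      rw [show r - a % 2 + a % 2 = r by omega]
    · rw [posF_inr (by omega) (by omega), posF_inr (by omega) (by omega), hμdef]
      simp only
      rw [show r - a % 2 + a % 2 = r by omega, show r' - b % 2 + b % 2 = r' by omega]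
  -- pairing property
  have hpair : ∀ z ∈ D, μ z ∈ D ∧ μ z ≠ z ∧ μ (μ z) = z ∧
      ((appendPath (prodCompleteGraphs n) u a).tensor
        (appendPath (prodCompleteGraphs n) v b)).Adj z (μ z) := by
    intro z hz
    rw [hDdef] at hz
    rcases hz with ((((hz | hz) | hz) | hz) | hz)
    · -- core diagonal
      obtain ⟨m, hm', rfl⟩ := hz
      have hm : m < 2*t+1 := by simpa using hm'
      by_cases hm2t : m = 2*t
      · subst hm2t
        rw [evalCore _ hm, if_pos rfl]
        refine ⟨memExtra, ?_, ?_, ?_⟩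
        · intro h
          have h1 := congrArg Prod.fst h
          simp only [Sum.inl.injEq] at h1
          exact hcne2 0 (2*t) (by omega) (by omega) (by omega) h1
        · rw [evalExtra]
        · exact (⟨hcadj (2*t) 0 (by omega) (by omega) (by omega),
            hcadj (2*t) 1 (by omega) (by omega) (by omega)⟩ : _ ∧ _)
      · by_cases hpar : m % 2 = 0
        · rw [evalCore _ hm, if_neg hm2t, if_pos hpar]
          refine ⟨memCore (m+1) (by omega), ?_, ?_, ?_⟩
          · intro h
            have h1 := congrArg Prod.fst h
            simp only [Sum.inl.injEq] at h1
            exact hcne2 (m+1) m (by omega) (by omega) (by omega) h1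
          · rw [evalCore (m+1) (by omega), if_neg (by omega), if_neg (by omega)]
            simp
          · exact (⟨hcadj m (m+1) (by omega) (by omega) (by omega),
              hcadj m (m+1) (by omega) (by omega) (by omega)⟩ : _ ∧ _)
        · rw [evalCore _ hm, if_neg hm2t, if_neg hpar]
          refine ⟨memCore (m-1) (by omega), ?_, ?_, ?_⟩
          · intro h
            have h1 := congrArg Prod.fst h
            simp only [Sum.inl.injEq] at h1
            exact hcne2 (m-1) m (by omega) (by omega) (by omega) h1
          · rw [evalCore (m-1) (by omega), if_neg (by omega), if_pos (by omega)]
            rw [show m - 1 + 1 = m by omega]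
          · exact (⟨hcadj m (m-1) (by omega) (by omega) (by omega),
              hcadj m (m-1) (by omega) (by omega) (by omega)⟩ : _ ∧ _)
    · -- extra vertex
      rw [Set.mem_singleton_iff] at hz
      subst hz
      rw [evalExtra]
      refine ⟨memCore (2*t) (by omega), ?_, ?_, ?_⟩
      · intro h
        have h1 := congrArg Prod.fst h
        simp only [Sum.inl.injEq] at h1
        exact hcne2 (2*t) 0 (by omega) (by omega) (by omega) h1
      · rw [evalCore (2*t) (by omega), if_pos rfl]
      · exact (⟨hcadj 0 (2*t) (by omega) (by omega) (by omega),
          hcadj 1 (2*t) (by omega) (by omega) (by omega)⟩ : _ ∧ _)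
    · -- column
      obtain ⟨⟨k, r⟩, hkr, rfl⟩ := hz
      simp only [Finset.coe_product, Set.mem_prod, Finset.mem_coe, Finset.mem_range] at hkr
      obtain ⟨hk, hr⟩ := hkr
      have hkt : k ≤ t := by omega
      have hkfle := kf_le t r k
      rw [evalCol (c k) r (hcu k (by omega)) hr, hci0 k (by omega)]
      refine ⟨memCol (kf t r k) (flipn r) (by omega) (flipn_lt hr hnbe), ?_, ?_, ?_⟩
      · intro h
        have h2 := congrArg Prod.snd h
        simp only at h2
        exact flipn_ne r (posF_inj (flipn_lt hr hnbe) hr h2)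
      · rw [evalCol (c (kf t r k)) (flipn r) (hcu _ (by omega)) (flipn_lt hr hnbe),
          hci0 _ (by omega), kf_kf hkt, flipn_flipn]
      · exact (⟨hcadj k (kf t r k) (by omega) (by omega) (Ne.symm (kf_ne (by omega) hkt)),
          posF_adj_flip hr⟩ : _ ∧ _)
    · -- row
      obtain ⟨⟨k, r⟩, hkr, rfl⟩ := hz
      simp only [Finset.coe_product, Set.mem_prod, Finset.mem_coe, Finset.mem_range] at hkr
      obtain ⟨hk, hr⟩ := hkr
      have hkt : k ≤ t := by omega
      have hkfle := kf_le t r k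
      rw [evalRow (c k) r (hcv k (by omega)) hr, hci0 k (by omega)]
      refine ⟨memRow (kf t r k) (flipn r) (by omega) (flipn_lt hr hnae), ?_, ?_, ?_⟩
      · intro h
        have h2 := congrArg Prod.fst h
        simp only at h2
        exact flipn_ne r (posF_inj (flipn_lt hr hnae) hr h2)
      · rw [evalRow (c (kf t r k)) (flipn r) (hcv _ (by omega)) (flipn_lt hr hnae),
          hci0 _ (by omega), kf_kf hkt, flipn_flipn]
      · exact (⟨posF_adj_flip hr,
          hcadj k (kf t r k) (by omega) (by omega) (Ne.symm (kf_ne (by omega) hkt))⟩ : _ ∧ _)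
    · -- grid
      obtain ⟨⟨r, r'⟩, hrr, rfl⟩ := hz
      simp only [Finset.coe_product, Set.mem_prod, Finset.mem_coe, Finset.mem_range] at hrr
      obtain ⟨hr, hr'⟩ := hrr
      rw [evalGrid r r' hr hr']
      refine ⟨memGrid _ _ (flipn_lt hr hnae) (flipn_lt hr' hnbe), ?_, ?_, ?_⟩
      · intro h
        have h2 := congrArg Prod.fst h
        simp only at h2
        exact flipn_ne r (posF_inj (flipn_lt hr hnae) hr h2)
      · rw [evalGrid _ _ (flipn_lt hr hnae) (flipn_lt hr' hnbe), flipn_flipn, flipn_flipn]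
      · exact (⟨posF_adj_flip hr, posF_adj_flip hr'⟩ : _ ∧ _)
  -- domination
  have hdom : ((appendPath (prodCompleteGraphs n) u a).tensor
      (appendPath (prodCompleteGraphs n) v b)).Dominating D := by
    rintro ⟨p, q⟩
    rcases p with x | i <;> rcases q with y | j
    · obtain ⟨m, hm, hx, hy⟩ := hdom2 x y
      exact ⟨(Sum.inl (c m), Sum.inl (c m)), memCore m hm,
        Or.inr (⟨hGadj m x hx, hGadj m y hy⟩ : _ ∧ _)⟩
    · obtain ⟨k, hk, hx⟩ := hdom1 x
      obtain ⟨r, hr, hadj⟩ := posF_nbr (G := prodCompleteGraphs n) (w := v) j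
      exact ⟨(Sum.inl (c k), posF v b r), memCol k r hk (by omega),
        Or.inr (⟨hGadj k x hx, hadj⟩ : _ ∧ _)⟩
    · obtain ⟨k, hk, hy⟩ := hdom1 y
      obtain ⟨r, hr, hadj⟩ := posF_nbr (G := prodCompleteGraphs n) (w := u) i
      exact ⟨(posF u a r, Sum.inl (c k)), memRow k r hk (by omega),
        Or.inr (⟨hadj, hGadj k y hy⟩ : _ ∧ _)⟩
    · obtain ⟨r, hr, ha1⟩ := posF_nbr (G := prodCompleteGraphs n) (w := u) i
      obtain ⟨r', hr', ha2⟩ := posF_nbr (G := prodCompleteGraphs n) (w := v) j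
      exact ⟨(posF u a r, posF v b r'), memGrid r r' (by omega) (by omega),
        Or.inr (⟨ha1, ha2⟩ : _ ∧ _)⟩
  -- cardinality bound
  have e1 : ((fun m => ((Sum.inl (c m) : (∀ i, Fin (n i)) ⊕ Fin a),
      (Sum.inl (c m) : (∀ i, Fin (n i)) ⊕ Fin b))) ''
      ↑(Finset.range (2*t+1))).ncard ≤ 2*t+1 := by
    refine le_trans (Set.ncard_image_le (Finset.finite_toSet _)) ?_
    rw [Set.ncard_coe_finset, Finset.card_range]
  have e3 : ((fun p : ℕ × ℕ => ((Sum.inl (c p.1) : (∀ i, Fin (n i)) ⊕ Fin a), posF v b p.2)) ''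
      ↑(Finset.range (t+1) ×ˢ Finset.range nb)).ncard ≤ (t+1)*nb := by
    refine le_trans (Set.ncard_image_le (Finset.finite_toSet _)) ?_
    rw [Set.ncard_coe_finset, Finset.card_product, Finset.card_range, Finset.card_range]
  have e4 : ((fun p : ℕ × ℕ => (posF u a p.2, (Sum.inl (c p.1) : (∀ i, Fin (n i)) ⊕ Fin b))) ''
      ↑(Finset.range (t+1) ×ˢ Finset.range na)).ncard ≤ (t+1)*na := by
    refine le_trans (Set.ncard_image_le (Finset.finite_toSet _)) ?_
    rw [Set.ncard_coe_finset, Finset.card_product, Finset.card_range, Finset.card_range]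
  have e5 : ((fun p : ℕ × ℕ => (posF u a p.1, posF v b p.2)) ''
      ↑(Finset.range na ×ˢ Finset.range nb)).ncard ≤ na*nb := by
    refine le_trans (Set.ncard_image_le (Finset.finite_toSet _)) ?_
    rw [Set.ncard_coe_finset, Finset.card_product, Finset.card_range, Finset.card_range]
  have hcard : D.ncard ≤ 2*t+2 + (t+1)*(na+nb) + na*nb := by
    rw [hDdef]
    have f1 : ((fun m => ((Sum.inl (c m) : (∀ i, Fin (n i)) ⊕ Fin a),
        (Sum.inl (c m) : (∀ i, Fin (n i)) ⊕ Fin b))) ''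
        ↑(Finset.range (2*t+1))).Finite := (Finset.finite_toSet _).image _
    have f2 : ({((Sum.inl (c 0) : (∀ i, Fin (n i)) ⊕ Fin a),
        (Sum.inl (c 1) : (∀ i, Fin (n i)) ⊕ Fin b))} :
        Set (((∀ i, Fin (n i)) ⊕ Fin a) × ((∀ i, Fin (n i)) ⊕ Fin b))).Finite :=
      Set.finite_singleton _
    have f3 : ((fun p : ℕ × ℕ => ((Sum.inl (c p.1) : (∀ i, Fin (n i)) ⊕ Fin a), posF v b p.2)) ''
        ↑(Finset.range (t+1) ×ˢ Finset.range nb)).Finite := (Finset.finite_toSet _).image _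
    have f4 : ((fun p : ℕ × ℕ => (posF u a p.2, (Sum.inl (c p.1) : (∀ i, Fin (n i)) ⊕ Fin b))) ''
        ↑(Finset.range (t+1) ×ˢ Finset.range na)).Finite := (Finset.finite_toSet _).image _
    have f5 : ((fun p : ℕ × ℕ => (posF u a p.1, posF v b p.2)) ''
        ↑(Finset.range na ×ˢ Finset.range nb)).Finite := (Finset.finite_toSet _).image _
    refine le_trans (Set.ncard_union_le _ _) ?_
    refine le_trans (Nat.add_le_add_right (Set.ncard_union_le _ _) _) ?_
    refine le_trans (Nat.add_le_add_right (Nat.add_le_add_right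
      (Set.ncard_union_le _ _) _) _) ?_
    refine le_trans (Nat.add_le_add_right (Nat.add_le_add_right (Nat.add_le_add_right
      (Set.ncard_union_le _ _) _) _) _) ?_
    have e2 : ({((Sum.inl (c 0) : (∀ i, Fin (n i)) ⊕ Fin a),
        (Sum.inl (c 1) : (∀ i, Fin (n i)) ⊕ Fin b))} :
        Set (((∀ i, Fin (n i)) ⊕ Fin a) × ((∀ i, Fin (n i)) ⊕ Fin b))).ncard = 1 :=
      Set.ncard_singleton _
    rw [e2, Nat.mul_add]
    linarith
  -- final assembly
  have hmatch := matching_of_pairing _ D μ hpair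
  have hfinal : ((appendPath (prodCompleteGraphs n) u a).tensor
      (appendPath (prodCompleteGraphs n) v b)).pairedDomNum ≤ D.ncard :=
    Nat.sInf_le ⟨D, ⟨hdom, hmatch⟩, rfl⟩
  refine le_trans hfinal (le_trans hcard ?_)
  have hA : na + 2 ≤ 2 * 2^a := by
    have h := na_bound a
    rw [pow_succ] at h
    rw [hnadef]
    linarith
  have hB : nb + 2 ≤ 2 * 2^b := by
    have h := na_bound b
    rw [pow_succ] at h
    rw [hnbdef]
    linarith
  have hkey := arith_key t na nb (2^a) (2^b) ht hA hB
  refine le_trans hkey ?_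
  rw [show (2:ℕ)^a * 2^b = 2^(a+b) from (pow_add 2 a b).symm]
  have hmid : 2*t+2 ≤ (a+2)*t+2*a+2 := by
    have : (a+2)*t = a*t + 2*t := by ring
    linarith [Nat.zero_le (a*t), Nat.zero_le a, this.ge, this.le]
  calc 2^(a+b)*(2*t+2) ≤ 2^(a+b)*((a+2)*t+2*a+2) := mul_le_mul_right hmid _
    _ ≤ 2^(a+b)*((a+2)*t+2*a+2) + 2^b*b*(t+a+2) := Nat.le_add_right _ _
end
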